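/- Suppose that for every i ∈ {1,…,m} with min(p^X_i, p^Y_i) = e_1 one has p^X_i = p^Y_i. Then: if e_1 > e_2 (or the set S defining e_2 is empty), Case b1) holds; if e_1 = e_2, Case b2) holds. -/

import Mathlib

open MeasureTheory ProbabilityTheory Filter Finset Topology

noncomputable section

attribute [local instance] Classical.propDecidable

/-- The simplex `Λ` of probability vectors on `{1,…,m}`. -/
def Lam (m : ℕ) : Set (Fin m → ℝ) := {l | (∀ i, 0 ≤ l i) ∧ ∑ i, l i = 1}

/-- `f(λ^X, λ^Y) = Σ_i min (p^X_i λ^X_i) (p^Y_i λ^Y_i)`. -/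
def fobj {m : ℕ} (pX pY : Fin m → ℝ) (l : (Fin m → ℝ) × (Fin m → ℝ)) : ℝ :=
  ∑ i, min (pX i * l.1 i) (pY i * l.2 i)

/-- `e_max`, the maximum of `f` over `Λ²`. -/
def emax {m : ℕ} (pX pY : Fin m → ℝ) : ℝ :=
  sSup (fobj pX pY '' (Lam m ×ˢ Lam m))

/-- The set `U`. -/
def Uset {m : ℕ} (pX pY : Fin m → ℝ) : Set (Fin m → ℝ) :=
  {u | (∀ i, 0 ≤ u i) ∧ (∑ i, u i / pX i) ≤ 1 ∧ (∑ i, u i / pY i) ≤ 1}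

/-- The set `L_U` of maximizers of `φ(u) = Σ_i u_i` over `U`. -/
def LU {m : ℕ} (pX pY : Fin m → ℝ) : Set (Fin m → ℝ) :=
  {u ∈ Uset pX pY | ∑ i, u i = emax pX pY}

/-- The set `I` of letters usable in a maximizer. -/
def Iset {m : ℕ} (pX pY : Fin m → ℝ) : Set (Fin m) :=
  {i | ∃ u ∈ LU pX pY, 0 < u i}

/-- Case a): some maximizer saturates the `X` constraint but not the `Y` one. -/
def CaseA {m : ℕ} (pX pY : Fin m → ℝ) : Prop :=
  ∃ u ∈ LU pX pY, (∑ i, u i / pX i) = 1 ∧ (∑ i, u i / pY i) < 1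

/-- Case b): every maximizer saturates both constraints. -/
def CaseB {m : ℕ} (pX pY : Fin m → ℝ) : Prop :=
  ∀ u ∈ LU pX pY, (∑ i, u i / pX i) = 1 ∧ (∑ i, u i / pY i) = 1

/-- Case b1): Case b) and the vectors `(1/p^X_i)_{i∈I}` and `(1/p^Y_i)_{i∈I}` coincide. -/
def CaseB1 {m : ℕ} (pX pY : Fin m → ℝ) : Prop :=
  CaseB pX pY ∧ ∀ i ∈ Iset pX pY, (pX i)⁻¹ = (pY i)⁻¹

/-- Case b2): Case b) and the vectors `(1/p^X_i)_{i∈I}` and `(1/p^Y_i)_{i∈I}` differ. -/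
def CaseB2 {m : ℕ} (pX pY : Fin m → ℝ) : Prop :=
  CaseB pX pY ∧ ¬ (∀ i ∈ Iset pX pY, (pX i)⁻¹ = (pY i)⁻¹)

/-- The set `K_{Λ²}` of maximizers of `f` over `Λ²`. -/
def Kset {m : ℕ} (pX pY : Fin m → ℝ) : Set ((Fin m → ℝ) × (Fin m → ℝ)) :=
  {l ∈ Lam m ×ˢ Lam m | fobj pX pY l = emax pX pY}

/-- `p^X_max`. -/
def pXmax {m : ℕ} (pX : Fin m → ℝ) : ℝ := ⨆ i, pX i

/-- The set `J` (Case a)). -/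
def Jset {m : ℕ} (pX pY : Fin m → ℝ) : Set (Fin m → ℝ) :=
  {l ∈ Lam m | (∀ i ∉ Iset pX pY, l i = 0) ∧
    (∑ i ∈ Finset.univ.filter (· ∈ Iset pX pY), l i / pY i) ≤ 1 / pXmax pX}

/-- `E = {x : Σ_i x_i = 0}`. -/
def Eset (m : ℕ) : Set (Fin m → ℝ) := {x | ∑ i, x i = 0}

/-- `E' = {x ∈ E : x_i ≥ 0 for i ∉ I}`. -/
def E'set {m : ℕ} (pX pY : Fin m → ℝ) : Set (Fin m → ℝ) :=
  {x ∈ Eset m | ∀ i ∉ Iset pX pY, 0 ≤ x i}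

/-- The function `𝔪` of Lemma 1.4. -/
def mfrak {m : ℕ} (pX pY : Fin m → ℝ) (ν : (Fin m → ℝ) × (Fin m → ℝ)) : ℝ :=
  sSup ((fun x : (Fin m → ℝ) × (Fin m → ℝ) =>
      ∑ i, min (pX i * x.1 i + ν.1 i) (pY i * x.2 i + ν.2 i)) ''
    (E'set pX pY ×ˢ E'set pX pY))

/-- Partial sum `λ_1 + … + λ_i`. -/
def psumLe {m : ℕ} (l : Fin m → ℝ) (i : Fin m) : ℝ :=
  ∑ j ∈ Finset.univ.filter (· ≤ i), l j

/-- Partial sum `λ_1 + … + λ_{i-1}`. -/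
def psumLt {m : ℕ} (l : Fin m → ℝ) (i : Fin m) : ℝ :=
  ∑ j ∈ Finset.univ.filter (· < i), l j

/-- `e(i,j)`. -/
def eij {m : ℕ} (pX pY : Fin m → ℝ) (i j : Fin m) : ℝ :=
  (pX i * pY i * (pX j - pY j) + pX j * pY j * (pY i - pX i)) /
    (pY i * pX j - pX i * pY j)

/-- The set `S` of admissible pairs `(i,j)` in the representation of `e_max`. -/
def Sset {m : ℕ} (pX pY : Fin m → ℝ) : Set (Fin m × Fin m) :=
  {ij | pX ij.1 < pX ij.2 ∧ pY ij.2 < pY ij.1 ∧ pX ij.1 < pY ij.1 ∧ pY ij.2 < pX ij.2}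

/-- `e_1 = max_i min(p^X_i, p^Y_i)`. -/
def e1 {m : ℕ} (pX pY : Fin m → ℝ) : ℝ := ⨆ i, min (pX i) (pY i)

/-- `e_2 = max_{(i,j)∈S} e(i,j)` (with `sSup ∅ = 0` when `S` is empty). -/
def e2 {m : ℕ} (pX pY : Fin m → ℝ) : ℝ :=
  sSup ((fun ij : Fin m × Fin m => eij pX pY ij.1 ij.2) '' Sset pX pY)


section Aux
variable {m : ℕ} {pX pY : Fin m → ℝ}

lemma fobj_le_dual (hpX : ∀ i, 0 < pX i) (hpY : ∀ i, 0 < pY i)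
    {α β : ℝ} (hα : 0 ≤ α) (hβ : 0 ≤ β)
    (hd : ∀ i, 1 ≤ α / pX i + β / pY i)
    {l : (Fin m → ℝ) × (Fin m → ℝ)} (hl : l ∈ Lam m ×ˢ Lam m) :
    fobj pX pY l ≤ α + β := by
  obtain ⟨⟨h1n, h1s⟩, h2n, h2s⟩ := hl
  have key : ∀ i, min (pX i * l.1 i) (pY i * l.2 i) ≤ α * l.1 i + β * l.2 i := by
    intro i
    set c := min (pX i * l.1 i) (pY i * l.2 i) with hc
    have hc0 : 0 ≤ c := le_min (mul_nonneg (hpX i).le (h1n i)) (mul_nonneg (hpY i).le (h2n i))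
    have hx : c / pX i ≤ l.1 i := by
      rw [div_le_iff₀ (hpX i), mul_comm]; exact min_le_left _ _
    have hy : c / pY i ≤ l.2 i := by
      rw [div_le_iff₀ (hpY i), mul_comm]; exact min_le_right _ _
    have h1 : 1 * c ≤ (α / pX i + β / pY i) * c := mul_le_mul_of_nonneg_right (hd i) hc0
    have h2 : (α / pX i + β / pY i) * c = α * (c / pX i) + β * (c / pY i) := by ring
    nlinarith [mul_le_mul_of_nonneg_left hx hα, mul_le_mul_of_nonneg_left hy hβ]
  calc fobj pX pY l ≤ ∑ i, (α * l.1 i + β * l.2 i) := Finset.sum_le_sum (fun i _ => key i)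
    _ = α * ∑ i, l.1 i + β * ∑ i, l.2 i := by
        rw [Finset.sum_add_distrib, Finset.mul_sum, Finset.mul_sum]
    _ = α + β := by rw [h1s, h2s]; ring

lemma delta_mem_Lam (i0 : Fin m) : (fun k => if k = i0 then (1:ℝ) else 0) ∈ Lam m := by
  constructor
  · intro i; dsimp only; split <;> norm_num
  · simp

lemma fobj_bdd (hpX : ∀ i, 0 < pX i) (hpY : ∀ i, 0 < pY i) (hpXsum : ∑ i, pX i = 1) :
    BddAbove (fobj pX pY '' (Lam m ×ˢ Lam m)) := by
  refine ⟨1, ?_⟩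
  rintro x ⟨l, hl, rfl⟩
  have hd : ∀ i, 1 ≤ (1:ℝ) / pX i + 0 / pY i := by
    intro i
    have hle : pX i ≤ 1 := hpXsum ▸ Finset.single_le_sum (fun j _ => (hpX j).le) (Finset.mem_univ i)
    rw [zero_div, add_zero]
    exact one_le_one_div (hpX i) hle
  have := fobj_le_dual hpX hpY zero_le_one le_rfl hd hl
  linarith

lemma emax_le_dual (hm : 2 ≤ m) (hpX : ∀ i, 0 < pX i) (hpY : ∀ i, 0 < pY i)
    {α β : ℝ} (hα : 0 ≤ α) (hβ : 0 ≤ β)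
    (hd : ∀ i, 1 ≤ α / pX i + β / pY i) :
    emax pX pY ≤ α + β := by
  apply csSup_le
  · exact ⟨_, Set.mem_image_of_mem _
      (Set.mk_mem_prod (delta_mem_Lam ⟨0, by omega⟩) (delta_mem_Lam ⟨0, by omega⟩))⟩
  · rintro x ⟨l, hl, rfl⟩; exact fobj_le_dual hpX hpY hα hβ hd hl

lemma slack_mem (hm : 2 ≤ m) {p u : Fin m → ℝ} (hp : ∀ i, 0 < p i)
    (hun : ∀ i, 0 ≤ u i) (hus : ∑ i, u i / p i ≤ 1) :
    (fun k => u k / p k + (if k = (⟨0, by omega⟩ : Fin m) then 1 - ∑ i, u i / p i else 0)) ∈ Lam m ∧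
      ∀ i, u i ≤ p i *
        (u i / p i + (if i = (⟨0, by omega⟩ : Fin m) then 1 - ∑ i, u i / p i else 0)) := by
  have h2 : ∀ i : Fin m, 0 ≤ (if i = (⟨0, by omega⟩ : Fin m) then 1 - ∑ j, u j / p j else 0) := by
    intro i; split
    · linarith
    · exact le_rfl
  refine ⟨⟨?_, ?_⟩, ?_⟩
  · intro i
    exact add_nonneg (div_nonneg (hun i) (hp i).le) (h2 i)
  · rw [Finset.sum_add_distrib, Finset.sum_ite_eq' Finset.univ]
    simp
  · intro i
    have hq : p i * (u i / p i) = u i := by rw [mul_comm, div_mul_cancel₀ _ (hp i).ne']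
    have := mul_nonneg (hp i).le (h2 i)
    rw [mul_add, hq]
    linarith

lemma sum_le_emax (hm : 2 ≤ m) (hpX : ∀ i, 0 < pX i) (hpY : ∀ i, 0 < pY i)
    (hpXsum : ∑ i, pX i = 1) {u : Fin m → ℝ} (hu : u ∈ Uset pX pY) :
    ∑ i, u i ≤ emax pX pY := by
  obtain ⟨hun, huX, huY⟩ := hu
  obtain ⟨hXmem, hXle⟩ := slack_mem hm hpX hun huX
  obtain ⟨hYmem, hYle⟩ := slack_mem hm hpY hun huY
  have hle : ∑ i, u i ≤ fobj pX pY (_, _) :=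
    Finset.sum_le_sum (fun i _ => le_min (hXle i) (hYle i))
  exact le_trans hle (le_csSup (fobj_bdd hpX hpY hpXsum)
    (Set.mem_image_of_mem _ (Set.mk_mem_prod hXmem hYmem)))

lemma e1_spec (hm : 2 ≤ m) :
    (∀ i, min (pX i) (pY i) ≤ e1 pX pY) ∧ ∃ i0, min (pX i0) (pY i0) = e1 pX pY := by
  haveI : Nonempty (Fin m) := ⟨⟨0, by omega⟩⟩
  obtain ⟨i0, hi0⟩ := Finite.exists_max (fun i => min (pX i) (pY i))
  have he : e1 pX pY = min (pX i0) (pY i0) := by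
    unfold e1
    exact le_antisymm (ciSup_le hi0)
      (le_ciSup (f := fun i => min (pX i) (pY i)) (Finite.bddAbove_range _) i0)
  exact ⟨fun i => he ▸ hi0 i, ⟨i0, he.symm⟩⟩

lemma e1_le_emax (hm : 2 ≤ m) (hpX : ∀ i, 0 < pX i) (hpY : ∀ i, 0 < pY i)
    (hpXsum : ∑ i, pX i = 1) : e1 pX pY ≤ emax pX pY := by
  obtain ⟨_, i0, hi0⟩ := e1_spec (pX := pX) (pY := pY) hm
  rw [← hi0]
  have hcalc : fobj pX pY (fun k => if k = i0 then (1:ℝ) else 0,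
      fun k => if k = i0 then (1:ℝ) else 0) = min (pX i0) (pY i0) := by
    unfold fobj
    have : ∀ k : Fin m, min (pX k * (if k = i0 then (1:ℝ) else 0))
        (pY k * (if k = i0 then (1:ℝ) else 0)) =
        if k = i0 then min (pX k) (pY k) else 0 := by
      intro k; split <;> simp
    rw [Finset.sum_congr rfl (fun k _ => this k), Finset.sum_ite_eq' Finset.univ]
    simp
  rw [← hcalc]
  exact le_csSup (fobj_bdd hpX hpY hpXsum)
    (Set.mem_image_of_mem _ (Set.mk_mem_prod (delta_mem_Lam i0) (delta_mem_Lam i0)))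

end Aux

section Aux2
variable {m : ℕ} {pX pY : Fin m → ℝ}

lemma dual_exists (hm : 2 ≤ m) (hpX : ∀ i, 0 < pX i) (hpY : ∀ i, 0 < pY i)
    (hsym : ∀ i, min (pX i) (pY i) = e1 pX pY → pX i = pY i)
    (hS : ∀ i j, (i, j) ∈ Sset pX pY → eij pX pY i j ≤ e1 pX pY) :
    ∃ α β : ℝ, 0 < α ∧ 0 < β ∧ α + β = e1 pX pY ∧ (∀ k, 1 ≤ α / pX k + β / pY k) ∧
      ((∀ i j, (i, j) ∈ Sset pX pY → eij pX pY i j < e1 pX pY) →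
        ∀ k, pX k ≠ pY k → 1 < α / pX k + β / pY k) := by
  haveI : Nonempty (Fin m) := ⟨⟨0, by omega⟩⟩
  obtain ⟨hle, i0, hi0⟩ := e1_spec (pX := pX) (pY := pY) hm
  set e := e1 pX pY with he
  have he0 : 0 < e := by rw [← hi0]; exact lt_min (hpX i0) (hpY i0)
  have hXlt : ∀ i, pX i < pY i → pX i < e := by
    intro i h
    rcases lt_or_eq_of_le (by simpa [min_eq_left h.le] using hle i) with h' | h'
    · exact h'
    · exact absurd (hsym i (by simpa [min_eq_left h.le] using h')) (ne_of_lt h)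
  have hYlt : ∀ j, pY j < pX j → pY j < e := by
    intro j h
    rcases lt_or_eq_of_le (by simpa [min_eq_right h.le] using hle j) with h' | h'
    · exact h'
    · exact absurd (hsym j (by simpa [min_eq_right h.le] using h')).symm (ne_of_lt h)
  set g : Fin m → ℝ := fun i => if pX i < pY i then pX i * (pY i - e) / (pY i - pX i) else 0
    with hg
  set h : Fin m → ℝ := fun j => if pY j < pX j then pX j * (e - pY j) / (pX j - pY j) else e
    with hh
  have hge : ∀ i, g i < e := by
    intro i; rw [hg]; dsimp only; split
    · rename_i hi
      rw [div_lt_iff₀ (by linarith)]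
      linarith [mul_lt_mul_of_pos_right (hXlt i hi) (hpY i)]
    · exact he0
  have hh0 : ∀ j, 0 < h j := by
    intro j; rw [hh]; dsimp only; split
    · rename_i hj
      exact div_pos (mul_pos (hpX j) (by linarith [hYlt j hj])) (by linarith)
    · exact he0
  have hSmem : ∀ i j, pX i < pY i → pY j < pX j → e < pY i → e < pX j → (i, j) ∈ Sset pX pY := by
    intro i j h1 h2 h3 h4
    exact ⟨lt_trans (hXlt i h1) h4, lt_trans (hYlt j h2) h3, h1, h2⟩
  have hD : ∀ i j, pX i < pY i → pY j < pX j → e < pY i → e < pX j →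
      0 < pY i * pX j - pX i * pY j := by
    intro i j h1 h2 h3 h4
    nlinarith [hXlt i h1, hYlt j h2, he0, hpX i, hpY j]
  -- key algebraic identity
  have hkey : ∀ i j : Fin m,
      pX i * (pY i - e) * (pX j - pY j) - pX j * (e - pY j) * (pY i - pX i) =
      (pX i * pY i * (pX j - pY j) + pX j * pY j * (pY i - pX i)) -
        e * (pY i * pX j - pX i * pY j) := by
    intro i j; ring
  have hab : ∀ i j, pX i < pY i → pY j < pX j → e < pY i → e < pX j →
      eij pX pY i j ≤ e →
      pX i * (pY i - e) / (pY i - pX i) ≤ pX j * (e - pY j) / (pX j - pY j) := by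
    intro i j h1 h2 h3 h4 hE
    have hD0 := hD i j h1 h2 h3 h4
    have hN : pX i * pY i * (pX j - pY j) + pX j * pY j * (pY i - pX i) ≤
        e * (pY i * pX j - pX i * pY j) := by
      have := (div_le_iff₀ hD0).mp hE
      linarith
    rw [div_le_div_iff₀ (by linarith) (by linarith)]
    have := hkey i j
    linarith
  have hab' : ∀ i j, pX i < pY i → pY j < pX j → e < pY i → e < pX j →
      eij pX pY i j < e →
      pX i * (pY i - e) / (pY i - pX i) < pX j * (e - pY j) / (pX j - pY j) := by
    intro i j h1 h2 h3 h4 hE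
    have hD0 := hD i j h1 h2 h3 h4
    have hN : pX i * pY i * (pX j - pY j) + pX j * pY j * (pY i - pX i) <
        e * (pY i * pX j - pX i * pY j) := by
      have := (div_lt_iff₀ hD0).mp hE
      linarith
    rw [div_lt_div_iff₀ (by linarith) (by linarith)]
    have := hkey i j
    linarith
  -- case analysis for g i vs h j, parametrized over strictness
  have hcases : ∀ i j, pX i < pY i → pY j < pX j → ¬ (e < pY i ∧ e < pX j) →
      pX i * (pY i - e) / (pY i - pX i) < pX j * (e - pY j) / (pX j - pY j) := by
    intro i j hi hj hnot
    rcases le_or_gt (pY i) e with h3 | h3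
    · have hL : pX i * (pY i - e) / (pY i - pX i) ≤ 0 :=
        div_nonpos_iff.mpr (Or.inr ⟨by nlinarith [hpX i], by linarith⟩)
      have hR : 0 < pX j * (e - pY j) / (pX j - pY j) :=
        div_pos (mul_pos (hpX j) (by linarith [hYlt j hj])) (by linarith)
      linarith
    · have h4 : pX j ≤ e := by
        by_contra h4
        exact hnot ⟨h3, lt_of_not_ge h4⟩
      have hR : e ≤ pX j * (e - pY j) / (pX j - pY j) := by
        rw [le_div_iff₀ (by linarith)]
        linarith [mul_le_mul_of_nonneg_right h4 (hpY j).le]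
      have hL : pX i * (pY i - e) / (pY i - pX i) < e := by
        rw [div_lt_iff₀ (by linarith)]
        linarith [mul_lt_mul_of_pos_right (hXlt i hi) (hpY i)]
      linarith
  have hgh : ∀ i j, g i ≤ h j := by
    intro i j
    by_cases hi : pX i < pY i
    · by_cases hj : pY j < pX j
      · have hgi : g i = pX i * (pY i - e) / (pY i - pX i) := by rw [hg]; simp only [if_pos hi]
        have hhj : h j = pX j * (e - pY j) / (pX j - pY j) := by rw [hh]; simp only [if_pos hj]
        rw [hgi, hhj]
        by_cases hc : e < pY i ∧ e < pX j
        · exact hab i j hi hj hc.1 hc.2 (hS i j (hSmem i j hi hj hc.1 hc.2))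
        · exact (hcases i j hi hj hc).le
      · have hhj : h j = e := by rw [hh]; simp only [if_neg hj]
        rw [hhj]; exact (hge i).le
    · have hgi : g i = 0 := by rw [hg]; simp only [if_neg hi]
      rw [hgi]; exact (hh0 j).le
  have hne : (Finset.univ : Finset (Fin m)).Nonempty := Finset.univ_nonempty
  set A := Finset.univ.sup' hne g with hA
  set B := Finset.univ.inf' hne h with hB
  have hAe : A < e := (Finset.sup'_lt_iff hne).2 (fun i _ => hge i)
  have hB0 : 0 < B := (Finset.lt_inf'_iff hne).2 (fun j _ => hh0 j)
  have hAB : A ≤ B :=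
    Finset.sup'_le hne g (fun i _ => Finset.le_inf' hne h (fun j _ => hgh i j))
  set α := (max A 0 + min B e) / 2 with hα
  have hA0e : max A 0 < e := max_lt hAe he0
  have hB0' : 0 < min B e := lt_min hB0 he0
  have hA0B0 : max A 0 ≤ min B e := max_le (le_min hAB hAe.le) (le_min hB0.le he0.le)
  have hα0 : 0 < α := by
    have := le_max_right A 0; rw [hα]; linarith
  have hαe : α < e := by rw [hα]; linarith [min_le_right B e]
  have hαA : ∀ i, g i ≤ α := by
    intro i
    have h1 : A ≤ α := by rw [hα]; linarith [le_max_left A 0, le_max_right A 0]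
    exact le_trans (Finset.le_sup' g (Finset.mem_univ i)) h1
  have hαB : ∀ j, α ≤ h j := by
    intro j
    have h1 : α ≤ B := by rw [hα]; linarith [min_le_left B e, min_le_right B e]
    exact le_trans h1 (Finset.inf'_le h (Finset.mem_univ j))
  have hfeas : ∀ k, 1 ≤ α / pX k + (e - α) / pY k := by
    intro k
    rcases lt_trichotomy (pX k) (pY k) with hk | hk | hk
    · have h1 : pX k * (pY k - e) ≤ α * (pY k - pX k) := by
        have h2 := hαA k
        rw [hg] at h2; simp only [if_pos hk] at h2
        exact (div_le_iff₀ (by linarith)).1 h2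
      rw [div_add_div _ _ (ne_of_gt (hpX k)) (ne_of_gt (hpY k)),
        le_div_iff₀ (mul_pos (hpX k) (hpY k))]
      linarith
    · have hp : pX k ≤ e := by
        have h2 := hle k
        rw [hk, min_self] at h2
        rw [hk]; exact h2
      rw [← hk, ← add_div, show α + (e - α) = e by ring]
      exact (one_le_div (hpX k)).2 hp
    · have h1 : α * (pX k - pY k) ≤ pX k * (e - pY k) := by
        have h2 := hαB k
        rw [hh] at h2; simp only [if_pos hk] at h2
        exact (le_div_iff₀ (by linarith)).1 h2
      rw [div_add_div _ _ (ne_of_gt (hpX k)) (ne_of_gt (hpY k)),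
        le_div_iff₀ (mul_pos (hpX k) (hpY k))]
      linarith
  refine ⟨α, e - α, hα0, by linarith, by ring, hfeas, ?_⟩
  intro hS' k hk
  -- strict part
  have hgh' : ∀ i j, g i < h j := by
    intro i j
    by_cases hi : pX i < pY i
    · by_cases hj : pY j < pX j
      · have hgi : g i = pX i * (pY i - e) / (pY i - pX i) := by rw [hg]; simp only [if_pos hi]
        have hhj : h j = pX j * (e - pY j) / (pX j - pY j) := by rw [hh]; simp only [if_pos hj]
        rw [hgi, hhj]
        by_cases hc : e < pY i ∧ e < pX j
        · exact hab' i j hi hj hc.1 hc.2 (hS' i j (hSmem i j hi hj hc.1 hc.2))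
        · exact hcases i j hi hj hc
      · have hhj : h j = e := by rw [hh]; simp only [if_neg hj]
        rw [hhj]; exact hge i
    · have hgi : g i = 0 := by rw [hg]; simp only [if_neg hi]
      rw [hgi]; exact hh0 j
  have hAB' : A < B :=
    (Finset.sup'_lt_iff hne).2 (fun i _ => (Finset.lt_inf'_iff hne).2 (fun j _ => hgh' i j))
  have hstrict : max A 0 < min B e := max_lt (lt_min hAB' hAe) (lt_min hB0 he0)
  have hαA' : ∀ i, g i < α := by
    intro i
    have h1 : A < α := by
      rw [hα]; have := le_max_left A 0; linarith
    exact lt_of_le_of_lt (Finset.le_sup' g (Finset.mem_univ i)) h1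
  have hαB' : ∀ j, α < h j := by
    intro j
    have h1 : α < B := by
      rw [hα]; have := min_le_left B e; linarith
    exact lt_of_lt_of_le h1 (Finset.inf'_le h (Finset.mem_univ j))
  rcases lt_trichotomy (pX k) (pY k) with hk' | hk' | hk'
  · have h1 : pX k * (pY k - e) < α * (pY k - pX k) := by
      have h2 := hαA' k
      rw [hg] at h2; simp only [if_pos hk'] at h2
      exact (div_lt_iff₀ (by linarith)).1 h2
    rw [div_add_div _ _ (ne_of_gt (hpX k)) (ne_of_gt (hpY k)),
      lt_div_iff₀ (mul_pos (hpX k) (hpY k))]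
    linarith
  · exact absurd hk' hk
  · have h1 : α * (pX k - pY k) < pX k * (e - pY k) := by
      have h2 := hαB' k
      rw [hh] at h2; simp only [if_pos hk'] at h2
      exact (lt_div_iff₀ (by linarith)).1 h2
    rw [div_add_div _ _ (ne_of_gt (hpX k)) (ne_of_gt (hpY k)),
      lt_div_iff₀ (mul_pos (hpX k) (hpY k))]
    linarith

lemma caseB_of_dual' (hm : 2 ≤ m) (hpX : ∀ i, 0 < pX i) (hpY : ∀ i, 0 < pY i)
    {α β : ℝ} (hα : 0 < α) (hβ : 0 < β)
    (hαβ : α + β = e1 pX pY) (hfeas : ∀ k, 1 ≤ α / pX k + β / pY k)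
    (hemax : emax pX pY = e1 pX pY) {u : Fin m → ℝ}
    (hu1 : u ∈ Uset pX pY) (hu2 : ∑ i, u i = emax pX pY) :
    (∑ i, u i / pX i) = 1 ∧ (∑ i, u i / pY i) = 1 := by
  obtain ⟨hun, hX, hY⟩ := hu1
  have h1 : ∑ k, u k ≤ α * ∑ k, u k / pX k + β * ∑ k, u k / pY k := by
    rw [Finset.mul_sum, Finset.mul_sum, ← Finset.sum_add_distrib]
    apply Finset.sum_le_sum
    intro k _
    have h2 := mul_le_mul_of_nonneg_left (hfeas k) (hun k)
    calc u k = u k * 1 := by ring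
      _ ≤ u k * (α / pX k + β / pY k) := h2
      _ = α * (u k / pX k) + β * (u k / pY k) := by ring
  rw [hu2, hemax, ← hαβ] at h1
  have hX' : α * (∑ k, u k / pX k) ≤ α * 1 := mul_le_mul_of_nonneg_left hX hα.le
  have hY' : β * (∑ k, u k / pY k) ≤ β * 1 := mul_le_mul_of_nonneg_left hY hβ.le
  have eX : α * (∑ k, u k / pX k) = α * 1 := by linarith
  have eY : β * (∑ k, u k / pY k) = β * 1 := by linarith
  exact ⟨mul_left_cancel₀ hα.ne' eX, mul_left_cancel₀ hβ.ne' eY⟩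

end Aux2

/-- Criterion: if every `i` with `min(p^X_i, p^Y_i) = e_1` satisfies `p^X_i = p^Y_i`, then
`e_1 > e_2` (or `S = ∅`) implies Case b1), and `e_1 = e_2` (with `S` nonempty) implies
Case b2). -/
theorem criterion_sym
    (m : ℕ) (hm : 2 ≤ m)
    (pX pY : Fin m → ℝ)
    (hpX : ∀ i, 0 < pX i) (hpY : ∀ i, 0 < pY i)
    (hpXsum : ∑ i, pX i = 1) (hpYsum : ∑ i, pY i = 1)
    (hsym : ∀ i, min (pX i) (pY i) = e1 pX pY → pX i = pY i) :
    ((Sset pX pY = ∅ ∨ e2 pX pY < e1 pX pY) → CaseB1 pX pY) ∧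
      ((Sset pX pY).Nonempty → e1 pX pY = e2 pX pY → CaseB2 pX pY) := by
  have hSfin : ((fun ij : Fin m × Fin m => eij pX pY ij.1 ij.2) '' Sset pX pY).Finite :=
    (Set.toFinite _).image _
  constructor
  · -- Case b1
    intro hb1
    have hS' : ∀ i j, (i, j) ∈ Sset pX pY → eij pX pY i j < e1 pX pY := by
      intro i j hij
      rcases hb1 with hemp | hlt
      · exact absurd hij (by rw [hemp]; exact Set.notMem_empty _)
      · exact lt_of_le_of_lt (le_csSup hSfin.bddAbove ⟨(i, j), hij, rfl⟩) hlt
    have hS : ∀ i j, (i, j) ∈ Sset pX pY → eij pX pY i j ≤ e1 pX pY :=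
      fun i j hij => (hS' i j hij).le
    obtain ⟨α, β, hα, hβ, hαβ, hfeas, hstrict⟩ := dual_exists hm hpX hpY hsym hS
    have hemax : emax pX pY = e1 pX pY :=
      le_antisymm (hαβ ▸ emax_le_dual hm hpX hpY hα.le hβ.le hfeas)
        (e1_le_emax hm hpX hpY hpXsum)
    have hCB : CaseB pX pY := fun u hu =>
      caseB_of_dual' hm hpX hpY hα hβ hαβ hfeas hemax hu.1 hu.2
    refine ⟨hCB, ?_⟩
    intro i hi
    obtain ⟨u, hu, hui⟩ := hi
    obtain ⟨hsX, hsY⟩ := hCB u hu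
    by_contra hneq
    have hpXY : pX i ≠ pY i := fun hh => hneq (by rw [hh])
    have hc := hstrict hS' i hpXY
    obtain ⟨⟨hun, _, _⟩, husum⟩ := hu
    have hsum0 : ∑ k, u k * (α / pX k + β / pY k - 1) = 0 := by
      have h1 : ∑ k, u k * (α / pX k + β / pY k) =
          α * ∑ k, u k / pX k + β * ∑ k, u k / pY k := by
        rw [Finset.mul_sum, Finset.mul_sum, ← Finset.sum_add_distrib]
        exact Finset.sum_congr rfl (fun k _ => by ring)
      have h2 : ∑ k, u k * (α / pX k + β / pY k - 1) =
          ∑ k, u k * (α / pX k + β / pY k) - ∑ k, u k := by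
        rw [← Finset.sum_sub_distrib]
        exact Finset.sum_congr rfl (fun k _ => by ring)
      rw [h2, h1, hsX, hsY, husum, hemax]
      linarith
    have hterm := (Finset.sum_eq_zero_iff_of_nonneg
      (fun k _ => mul_nonneg (hun k) (by linarith [hfeas k]))).1 hsum0 i (Finset.mem_univ i)
    nlinarith
  · -- Case b2
    intro hSne heq
    have hS : ∀ i j, (i, j) ∈ Sset pX pY → eij pX pY i j ≤ e1 pX pY := by
      intro i j hij
      rw [heq]
      exact le_csSup hSfin.bddAbove ⟨(i, j), hij, rfl⟩
    obtain ⟨α, β, hα, hβ, hαβ, hfeas, _⟩ := dual_exists hm hpX hpY hsym hS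
    have hemax : emax pX pY = e1 pX pY :=
      le_antisymm (hαβ ▸ emax_le_dual hm hpX hpY hα.le hβ.le hfeas)
        (e1_le_emax hm hpX hpY hpXsum)
    have hCB : CaseB pX pY := fun u hu =>
      caseB_of_dual' hm hpX hpY hα hβ hαβ hfeas hemax hu.1 hu.2
    refine ⟨hCB, ?_⟩
    -- the sup e2 is attained
    have hmem : sSup ((fun ij : Fin m × Fin m => eij pX pY ij.1 ij.2) '' Sset pX pY) ∈
        ((fun ij : Fin m × Fin m => eij pX pY ij.1 ij.2) '' Sset pX pY) :=
      Set.Nonempty.csSup_mem (hSne.image _) hSfin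
    obtain ⟨⟨i, j⟩, hijS, hij⟩ := hmem
    obtain ⟨hXX, hYY, hXY, hYX⟩ := hijS
    set D := pY i * pX j - pX i * pY j with hD
    have hD0 : 0 < D := by nlinarith [hpX i, hpY j, hpX j, hpY i]
    set a := pX i * pY i * (pX j - pY j) / D with ha
    set b := pX j * pY j * (pY i - pX i) / D with hb
    have hij' : i ≠ j := fun hh => by rw [hh] at hXX; exact lt_irrefl _ hXX
    have ha0 : 0 < a :=
      div_pos (mul_pos (mul_pos (hpX i) (hpY i)) (by linarith)) hD0
    have hb0 : 0 < b :=
      div_pos (mul_pos (mul_pos (hpX j) (hpY j)) (by linarith)) hD0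
    set u : Fin m → ℝ := fun k => (if k = i then a else 0) + (if k = j then b else 0) with hu
    have husplit : ∀ (q : Fin m → ℝ), ∑ k, u k / q k =
        a / q i + b / q j := by
      intro q
      have hc : ∀ k : Fin m, u k / q k =
          (if k = i then a / q k else 0) + (if k = j then b / q k else 0) := by
        intro k
        rw [hu]; dsimp only
        rw [add_div]
        congr 1 <;> split <;> simp
      rw [Finset.sum_congr rfl (fun k _ => hc k), Finset.sum_add_distrib,
        Finset.sum_ite_eq' Finset.univ, Finset.sum_ite_eq' Finset.univ]
      simp
    have hkeyX : a * pX j + b * pX i = pX i * pX j := by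
      rw [ha, hb, div_mul_eq_mul_div, div_mul_eq_mul_div, ← add_div,
        div_eq_iff hD0.ne']
      ring
    have hkeyY : a * pY j + b * pY i = pY i * pY j := by
      rw [ha, hb, div_mul_eq_mul_div, div_mul_eq_mul_div, ← add_div,
        div_eq_iff hD0.ne']
      ring
    have hsumX : ∑ k, u k / pX k = 1 := by
      rw [husplit pX, div_add_div _ _ (hpX i).ne' (hpX j).ne',
        div_eq_one_iff_eq (mul_pos (hpX i) (hpX j)).ne']
      linarith
    have hsumY : ∑ k, u k / pY k = 1 := by
      rw [husplit pY, div_add_div _ _ (hpY i).ne' (hpY j).ne',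
        div_eq_one_iff_eq (mul_pos (hpY i) (hpY j)).ne']
      linarith
    have hij2 : eij pX pY i j = e2 pX pY := hij
    have hsumu : ∑ k, u k = emax pX pY := by
      have h1 : ∑ k, u k = a + b := by
        have := husplit (fun _ => (1:ℝ))
        simpa using this
      have h2 : a + b = eij pX pY i j := by
        rw [ha, hb, ← add_div]; rfl
      rw [h1, h2, hij2, hemax, heq]
    have humem : u ∈ LU pX pY := by
      refine ⟨⟨?_, le_of_eq hsumX, le_of_eq hsumY⟩, hsumu⟩
      intro k
      rw [hu]; dsimp only
      apply add_nonneg <;> split <;> first | exact ha0.le | exact hb0.le | exact le_rfl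
    intro hall
    have hiI : i ∈ Iset pX pY := by
      refine ⟨u, humem, ?_⟩
      rw [hu]; dsimp only
      rw [if_pos rfl, if_neg hij']
      linarith
    have : pX i = pY i := inv_injective (hall i hiI)
    linarith


end
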